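/- Droz–Farny theorem: if two perpendicular lines through the orthocentre H of triangle ABC meet line BC at X₁, X₂, line CA at Y₁, Y₂, and line AB at Z₁, Z₂, then the midpoints of segments X₁X₂, Y₁Y₂, Z₁Z₂ are collinear. -/

import Mathlib

open RealInnerProductSpace

private lemma aux_zero (x0 x1 e0 e1 f0 f1 : ℝ) (h1 : x0 * e1 - x1 * e0 = 0)
    (h2 : x0 * f0 + x1 * f1 = 0) (hd : e0 * f0 + e1 * f1 ≠ 0) : x0 = 0 ∧ x1 = 0 := by
  constructor
  · have h : x0 * (e0 * f0 + e1 * f1) = 0 := by linear_combination f1 * h1 + e0 * h2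
    exact (mul_eq_zero.mp h).resolve_right hd
  · have h : x1 * (e0 * f0 + e1 * f1) = 0 := by linear_combination (-f0) * h1 + e1 * h2
    exact (mul_eq_zero.mp h).resolve_right hd

private lemma cross_of_collinear (p q r : EuclideanSpace ℝ (Fin 2))
    (h : Collinear ℝ ({p, q, r} : Set (EuclideanSpace ℝ (Fin 2)))) :
    (q 0 - p 0) * (r 1 - p 1) - (q 1 - p 1) * (r 0 - p 0) = 0 := by
  rw [collinear_iff_of_mem (Set.mem_insert p _)] at h
  obtain ⟨v, hv⟩ := h
  obtain ⟨rq, hq⟩ := hv q (by simp)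
  obtain ⟨rr, hr⟩ := hv r (by simp)
  rw [hq, hr]
  simp [vadd_eq_add]
  ring

private lemma collinear_of_cross (p q r : EuclideanSpace ℝ (Fin 2))
    (h : (q 0 - p 0) * (r 1 - p 1) - (q 1 - p 1) * (r 0 - p 0) = 0) :
    Collinear ℝ ({p, q, r} : Set (EuclideanSpace ℝ (Fin 2))) := by
  by_cases hqp : q = p
  · rw [show ({p, q, r} : Set (EuclideanSpace ℝ (Fin 2))) = {p, r} by rw [hqp]; simp]
    exact collinear_pair ℝ p r
  · rw [collinear_iff_of_mem (Set.mem_insert p _)]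
    refine ⟨q - p, ?_⟩
    intro x hx
    rcases hx with rfl | rfl | rfl
    · exact ⟨0, by simp⟩
    · exact ⟨1, by simp [vadd_eq_add]⟩
    · have hne : q 0 - p 0 ≠ 0 ∨ q 1 - p 1 ≠ 0 := by
        by_contra hc
        push_neg at hc
        apply hqp
        ext i
        fin_cases i
        · simpa [sub_eq_zero] using hc.1
        · simpa [sub_eq_zero] using hc.2
      rcases hne with h0 | h0
      · refine ⟨(x 0 - p 0) / (q 0 - p 0), ?_⟩
        ext i
        fin_cases i
        · simp [vadd_eq_add]; field_simp; ring
        · simp [vadd_eq_add]; field_simp; linear_combination h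
      · refine ⟨(x 1 - p 1) / (q 1 - p 1), ?_⟩
        ext i
        fin_cases i
        · simp [vadd_eq_add]; field_simp; linear_combination -h
        · simp [vadd_eq_add]; field_simp; ring

private lemma midcoord (x y : EuclideanSpace ℝ (Fin 2)) (i : Fin 2) :
    midpoint ℝ x y i = (x i + y i) / 2 := by
  rw [midpoint_eq_smul_add]
  simp
  ring

/-- Droz–Farny theorem: if two perpendicular lines through the orthocentre `H` of a
(non-right-angled) triangle `A B C`, with direction vectors `u ⊥ v`, meet line `BC` at
`X₁, X₂`, line `CA` at `Y₁, Y₂`, and line `AB` at `Z₁, Z₂`, then the midpoints of the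
segments `X₁X₂`, `Y₁Y₂`, `Z₁Z₂` are collinear. -/
theorem stmt_11 (A B C H u v X₁ X₂ Y₁ Y₂ Z₁ Z₂ : EuclideanSpace ℝ (Fin 2))
    (htri : AffineIndependent ℝ ![A, B, C])
    (hH1 : ⟪H - A, B - C⟫ = 0) (hH2 : ⟪H - B, C - A⟫ = 0)
    (hnrA : ⟪B - A, C - A⟫ ≠ 0) (hnrB : ⟪A - B, C - B⟫ ≠ 0)
    (hnrC : ⟪A - C, B - C⟫ ≠ 0)
    (hu : u ≠ 0) (hv : v ≠ 0) (huv : ⟪u, v⟫ = 0)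
    (hX₁ : Collinear ℝ ({B, C, X₁} : Set (EuclideanSpace ℝ (Fin 2))) ∧
      ∃ t : ℝ, X₁ = H + t • u)
    (hX₂ : Collinear ℝ ({B, C, X₂} : Set (EuclideanSpace ℝ (Fin 2))) ∧
      ∃ t : ℝ, X₂ = H + t • v)
    (hY₁ : Collinear ℝ ({C, A, Y₁} : Set (EuclideanSpace ℝ (Fin 2))) ∧
      ∃ t : ℝ, Y₁ = H + t • u)
    (hY₂ : Collinear ℝ ({C, A, Y₂} : Set (EuclideanSpace ℝ (Fin 2))) ∧
      ∃ t : ℝ, Y₂ = H + t • v)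
    (hZ₁ : Collinear ℝ ({A, B, Z₁} : Set (EuclideanSpace ℝ (Fin 2))) ∧
      ∃ t : ℝ, Z₁ = H + t • u)
    (hZ₂ : Collinear ℝ ({A, B, Z₂} : Set (EuclideanSpace ℝ (Fin 2))) ∧
      ∃ t : ℝ, Z₂ = H + t • v) :
    Collinear ℝ ({midpoint ℝ X₁ X₂, midpoint ℝ Y₁ Y₂, midpoint ℝ Z₁ Z₂} :
      Set (EuclideanSpace ℝ (Fin 2))) := by
  -- raw coordinate facts
  have hU2 : u 0 ^ 2 + u 1 ^ 2 ≠ 0 := by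
    intro h
    apply hu
    have h0 : u 0 = 0 := by nlinarith [sq_nonneg (u 0), sq_nonneg (u 1)]
    have h1 : u 1 = 0 := by nlinarith [sq_nonneg (u 0), sq_nonneg (u 1)]
    ext i; fin_cases i <;> simpa using ‹_›
  have he1R : (H 0 - A 0) * (B 0 - C 0) + (H 1 - A 1) * (B 1 - C 1) = 0 := by
    have h := hH1; simp [PiLp.inner_apply, Fin.sum_univ_two, PiLp.sub_apply, RCLike.inner_apply,
      conj_trivial] at h; linear_combination h
  have he2R : (H 0 - B 0) * (C 0 - A 0) + (H 1 - B 1) * (C 1 - A 1) = 0 := by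
    have h := hH2; simp [PiLp.inner_apply, Fin.sum_univ_two, PiLp.sub_apply, RCLike.inner_apply,
      conj_trivial] at h; linear_combination h
  have he3R : u 0 * v 0 + u 1 * v 1 = 0 := by
    have h := huv; simp [PiLp.inner_apply, Fin.sum_univ_two, RCLike.inner_apply, conj_trivial] at h; linear_combination h
  have hnrAR : (B 0 - A 0) * (C 0 - A 0) + (B 1 - A 1) * (C 1 - A 1) ≠ 0 := by
    intro hq
    apply hnrA
    simp only [PiLp.inner_apply, Fin.sum_univ_two, PiLp.sub_apply, RCLike.inner_apply,
      conj_trivial]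
    linear_combination hq
  have hnrBR : (A 0 - B 0) * (C 0 - B 0) + (A 1 - B 1) * (C 1 - B 1) ≠ 0 := by
    intro hq
    apply hnrB
    simp only [PiLp.inner_apply, Fin.sum_univ_two, PiLp.sub_apply, RCLike.inner_apply,
      conj_trivial]
    linear_combination hq
  have hnrCR : (A 0 - C 0) * (B 0 - C 0) + (A 1 - C 1) * (B 1 - C 1) ≠ 0 := by
    intro hq
    apply hnrC
    simp only [PiLp.inner_apply, Fin.sum_univ_two, PiLp.sub_apply, RCLike.inner_apply,
      conj_trivial]
    linear_combination hq
  -- intersection points, raw collinearity facts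
  obtain ⟨hX1c, t1, hX1⟩ := hX₁
  obtain ⟨hX2c, t2, hX2⟩ := hX₂
  obtain ⟨hY1c, t3, hY1⟩ := hY₁
  obtain ⟨hY2c, t4, hY2⟩ := hY₂
  obtain ⟨hZ1c, t5, hZ1⟩ := hZ₁
  obtain ⟨hZ2c, t6, hZ2⟩ := hZ₂
  have hX10 : X₁ 0 = H 0 + t1 * u 0 := by rw [hX1]; simp
  have hX11 : X₁ 1 = H 1 + t1 * u 1 := by rw [hX1]; simp
  have hX20 : X₂ 0 = H 0 + t2 * v 0 := by rw [hX2]; simp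
  have hX21 : X₂ 1 = H 1 + t2 * v 1 := by rw [hX2]; simp
  have hY10 : Y₁ 0 = H 0 + t3 * u 0 := by rw [hY1]; simp
  have hY11 : Y₁ 1 = H 1 + t3 * u 1 := by rw [hY1]; simp
  have hY20 : Y₂ 0 = H 0 + t4 * v 0 := by rw [hY2]; simp
  have hY21 : Y₂ 1 = H 1 + t4 * v 1 := by rw [hY2]; simp
  have hZ10 : Z₁ 0 = H 0 + t5 * u 0 := by rw [hZ1]; simp
  have hZ11 : Z₁ 1 = H 1 + t5 * u 1 := by rw [hZ1]; simp
  have hZ20 : Z₂ 0 = H 0 + t6 * v 0 := by rw [hZ2]; simp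
  have hZ21 : Z₂ 1 = H 1 + t6 * v 1 := by rw [hZ2]; simp
  have hc1 := cross_of_collinear B C X₁ hX1c
  have hc2 := cross_of_collinear B C X₂ hX2c
  have hc3 := cross_of_collinear C A Y₁ hY1c
  have hc4 := cross_of_collinear C A Y₂ hY2c
  have hc5 := cross_of_collinear A B Z₁ hZ1c
  have hc6 := cross_of_collinear A B Z₂ hZ2c
  rw [hX10, hX11] at hc1
  rw [hX20, hX21] at hc2
  rw [hY10, hY11] at hc3
  rw [hY20, hY21] at hc4
  rw [hZ10, hZ11] at hc5
  rw [hZ20, hZ21] at hc6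
  -- transformed coordinates (rotate/scale by R = [[u0,u1],[-u1,u0]], origin at H)
  obtain ⟨pa0, hpa0⟩ : ∃ x : ℝ, x = (A 0 - H 0) * u 0 + (A 1 - H 1) * u 1 := ⟨_, rfl⟩
  obtain ⟨pa1, hpa1⟩ : ∃ x : ℝ, x = u 0 * (A 1 - H 1) - u 1 * (A 0 - H 0) := ⟨_, rfl⟩
  obtain ⟨pb0, hpb0⟩ : ∃ x : ℝ, x = (B 0 - H 0) * u 0 + (B 1 - H 1) * u 1 := ⟨_, rfl⟩
  obtain ⟨pb1, hpb1⟩ : ∃ x : ℝ, x = u 0 * (B 1 - H 1) - u 1 * (B 0 - H 0) := ⟨_, rfl⟩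
  obtain ⟨pc0, hpc0⟩ : ∃ x : ℝ, x = (C 0 - H 0) * u 0 + (C 1 - H 1) * u 1 := ⟨_, rfl⟩
  obtain ⟨pc1, hpc1⟩ : ∃ x : ℝ, x = u 0 * (C 1 - H 1) - u 1 * (C 0 - H 0) := ⟨_, rfl⟩
  obtain ⟨s1, hs1⟩ : ∃ x : ℝ, x = t1 * (u 0 ^ 2 + u 1 ^ 2) := ⟨_, rfl⟩
  obtain ⟨s2, hs2⟩ : ∃ x : ℝ, x = t2 * (u 0 * v 1 - u 1 * v 0) := ⟨_, rfl⟩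
  obtain ⟨s3, hs3⟩ : ∃ x : ℝ, x = t3 * (u 0 ^ 2 + u 1 ^ 2) := ⟨_, rfl⟩
  obtain ⟨s4, hs4⟩ : ∃ x : ℝ, x = t4 * (u 0 * v 1 - u 1 * v 0) := ⟨_, rfl⟩
  obtain ⟨s5, hs5⟩ : ∃ x : ℝ, x = t5 * (u 0 ^ 2 + u 1 ^ 2) := ⟨_, rfl⟩
  obtain ⟨s6, hs6⟩ : ∃ x : ℝ, x = t6 * (u 0 * v 1 - u 1 * v 0) := ⟨_, rfl⟩
  -- transformed hypotheses
  have he1 : pa0 * (pb0 - pc0) + pa1 * (pb1 - pc1) = 0 := by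
    rw [hpa0, hpa1, hpb0, hpb1, hpc0, hpc1]
    linear_combination (-(u 0 ^ 2 + u 1 ^ 2)) * he1R
  have he2 : pb0 * (pc0 - pa0) + pb1 * (pc1 - pa1) = 0 := by
    rw [hpa0, hpa1, hpb0, hpb1, hpc0, hpc1]
    linear_combination (-(u 0 ^ 2 + u 1 ^ 2)) * he2R
  have he3 : pc0 * (pa0 - pb0) + pc1 * (pa1 - pb1) = 0 := by
    linear_combination -he1 - he2
  have hf1 : (s1 - pb0) * (pc1 - pb1) - (0 - pb1) * (pc0 - pb0) = 0 := by
    rw [hs1, hpb0, hpb1, hpc0, hpc1]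
    linear_combination (-(u 0 ^ 2 + u 1 ^ 2)) * hc1
  have hf2 : (0 - pb0) * (pc1 - pb1) - (s2 - pb1) * (pc0 - pb0) = 0 := by
    rw [hs2, hpb0, hpb1, hpc0, hpc1]
    linear_combination (-(u 0 ^ 2 + u 1 ^ 2)) * hc2 +
      (-(t2 * (u 0 * (C 1 - B 1) - u 1 * (C 0 - B 0)))) * he3R
  have hf3 : (s3 - pc0) * (pa1 - pc1) - (0 - pc1) * (pa0 - pc0) = 0 := by
    rw [hs3, hpa0, hpa1, hpc0, hpc1]
    linear_combination (-(u 0 ^ 2 + u 1 ^ 2)) * hc3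
  have hf4 : (0 - pc0) * (pa1 - pc1) - (s4 - pc1) * (pa0 - pc0) = 0 := by
    rw [hs4, hpa0, hpa1, hpc0, hpc1]
    linear_combination (-(u 0 ^ 2 + u 1 ^ 2)) * hc4 +
      (-(t4 * (u 0 * (A 1 - C 1) - u 1 * (A 0 - C 0)))) * he3R
  have hf5 : (s5 - pa0) * (pb1 - pa1) - (0 - pa1) * (pb0 - pa0) = 0 := by
    rw [hs5, hpa0, hpa1, hpb0, hpb1]
    linear_combination (-(u 0 ^ 2 + u 1 ^ 2)) * hc5
  have hf6 : (0 - pa0) * (pb1 - pa1) - (s6 - pa1) * (pb0 - pa0) = 0 := by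
    rw [hs6, hpa0, hpa1, hpb0, hpb1]
    linear_combination (-(u 0 ^ 2 + u 1 ^ 2)) * hc6 +
      (-(t6 * (u 0 * (B 1 - A 1) - u 1 * (B 0 - A 0)))) * he3R
  have hnrA' : (pb0 - pa0) * (pc0 - pa0) + (pb1 - pa1) * (pc1 - pa1) ≠ 0 := by
    intro hq
    apply hnrAR
    rw [hpa0, hpa1, hpb0, hpb1, hpc0, hpc1] at hq
    have h2 : (u 0 ^ 2 + u 1 ^ 2) *
        ((B 0 - A 0) * (C 0 - A 0) + (B 1 - A 1) * (C 1 - A 1)) = 0 := by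
      linear_combination hq
    exact (mul_eq_zero.mp h2).resolve_left hU2
  have hnrB' : (pa0 - pb0) * (pc0 - pb0) + (pa1 - pb1) * (pc1 - pb1) ≠ 0 := by
    intro hq
    apply hnrBR
    rw [hpa0, hpa1, hpb0, hpb1, hpc0, hpc1] at hq
    have h2 : (u 0 ^ 2 + u 1 ^ 2) *
        ((A 0 - B 0) * (C 0 - B 0) + (A 1 - B 1) * (C 1 - B 1)) = 0 := by
      linear_combination hq
    exact (mul_eq_zero.mp h2).resolve_left hU2
  have hnrC' : (pa0 - pc0) * (pb0 - pc0) + (pa1 - pc1) * (pb1 - pc1) ≠ 0 := by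
    intro hq
    apply hnrCR
    rw [hpa0, hpa1, hpb0, hpb1, hpc0, hpc1] at hq
    have h2 : (u 0 ^ 2 + u 1 ^ 2) *
        ((A 0 - C 0) * (B 0 - C 0) + (A 1 - C 1) * (B 1 - C 1)) = 0 := by
      linear_combination hq
    exact (mul_eq_zero.mp h2).resolve_left hU2
  -- no line through H is parallel to an edge: six nonzero denominators
  have hd1 : pc1 - pb1 ≠ 0 := by
    intro hz
    have hcr : pb0 * pc1 - pb1 * pc0 = 0 := by linear_combination -hf1 + s1 * hz
    obtain ⟨hb0, hb1⟩ := aux_zero pb0 pb1 (pc0 - pb0) (pc1 - pb1) (pc0 - pa0) (pc1 - pa1)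
      (by linear_combination hcr) (by linear_combination he2)
      (fun hq => hnrC' (by linear_combination hq))
    exact hnrB' (by linear_combination -he1 + (pb0 - pc0) * hb0 + (pb1 - pc1) * hb1)
  have hd2 : pb0 - pc0 ≠ 0 := by
    intro hz
    have hcr : pb0 * pc1 - pb1 * pc0 = 0 := by linear_combination -hf2 + s2 * hz
    obtain ⟨hb0, hb1⟩ := aux_zero pb0 pb1 (pc0 - pb0) (pc1 - pb1) (pc0 - pa0) (pc1 - pa1)
      (by linear_combination hcr) (by linear_combination he2)
      (fun hq => hnrC' (by linear_combination hq))
    exact hnrB' (by linear_combination -he1 + (pb0 - pc0) * hb0 + (pb1 - pc1) * hb1)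
  have hd3 : pa1 - pc1 ≠ 0 := by
    intro hz
    have hcr : pc0 * pa1 - pc1 * pa0 = 0 := by linear_combination -hf3 + s3 * hz
    obtain ⟨hc0', hc1'⟩ := aux_zero pc0 pc1 (pa0 - pc0) (pa1 - pc1) (pa0 - pb0) (pa1 - pb1)
      (by linear_combination hcr) (by linear_combination he3)
      (fun hq => hnrA' (by linear_combination hq))
    exact hnrC' (by linear_combination he1 + (pc0 - pb0) * hc0' + (pc1 - pb1) * hc1')
  have hd4 : pc0 - pa0 ≠ 0 := by
    intro hz
    have hcr : pc0 * pa1 - pc1 * pa0 = 0 := by linear_combination -hf4 + s4 * hz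
    obtain ⟨hc0', hc1'⟩ := aux_zero pc0 pc1 (pa0 - pc0) (pa1 - pc1) (pa0 - pb0) (pa1 - pb1)
      (by linear_combination hcr) (by linear_combination he3)
      (fun hq => hnrA' (by linear_combination hq))
    exact hnrC' (by linear_combination he1 + (pc0 - pb0) * hc0' + (pc1 - pb1) * hc1')
  have hd5 : pb1 - pa1 ≠ 0 := by
    intro hz
    have hcr : pa0 * pb1 - pa1 * pb0 = 0 := by linear_combination -hf5 + s5 * hz
    obtain ⟨ha0, ha1⟩ := aux_zero pa0 pa1 (pb0 - pa0) (pb1 - pa1) (pb0 - pc0) (pb1 - pc1)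
      (by linear_combination hcr) (by linear_combination he1)
      (fun hq => hnrB' (by linear_combination hq))
    exact hnrA' (by linear_combination he2 + (pa0 - pc0) * ha0 + (pa1 - pc1) * ha1)
  have hd6 : pa0 - pb0 ≠ 0 := by
    intro hz
    have hcr : pa0 * pb1 - pa1 * pb0 = 0 := by linear_combination -hf6 + s6 * hz
    obtain ⟨ha0, ha1⟩ := aux_zero pa0 pa1 (pb0 - pa0) (pb1 - pa1) (pb0 - pc0) (pb1 - pc1)
      (by linear_combination hcr) (by linear_combination he1)
      (fun hq => hnrB' (by linear_combination hq))
    exact hnrA' (by linear_combination he2 + (pa0 - pc0) * ha0 + (pa1 - pc1) * ha1)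
  -- the certificate
  have hkey : ((pc1 - pb1) * (pb0 - pc0) * (pa1 - pc1) * (pc0 - pa0) * (pb1 - pa1) *
      (pa0 - pb0)) * ((s3 - s1) * (s6 - s2) - (s4 - s2) * (s5 - s1)) = 0 := by
    linear_combination
      (s6*pb0*pb1*pc0^2*pc1 - s6*pb0^2*pb1*pc0*pc1 - s6*pa1*pb0*pc0^2*pc1 - s6*pa1*pb0*pb1*pc0^2 + s6*pa1*pb0^2*pc0*pc1 + s6*pa1*pb0^2*pb1*pc0 + s6*pa1^2*pb0*pc0^2 - s6*pa1^2*pb0^2*pc0 - s6*pa0*pb1*pc0^2*pc1 + s6*pa0*pb0^2*pb1*pc1 + s6*pa0*pa1*pc0^2*pc1 + s6*pa0*pa1*pb1*pc0^2 - s6*pa0*pa1*pb0^2*pc1 - s6*pa0*pa1*pb0^2*pb1 - s6*pa0*pa1^2*pc0^2 + s6*pa0*pa1^2*pb0^2 + s6*pa0^2*pb1*pc0*pc1 - s6*pa0^2*pb0*pb1*pc1 - s6*pa0^2*pa1*pc0*pc1 - s6*pa0^2*pa1*pb1*pc0 + s6*pa0^2*pa1*pb0*pc1 + s6*pa0^2*pa1*pb0*pb1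 + s6*pa0^2*pa1^2*pc0 - s6*pa0^2*pa1^2*pb0 - s4*pb0*pb1*pc0^2*pc1 + s4*pb0^2*pb1*pc0*pc1 + s4*pa1*pb0*pc0^2*pc1 + s4*pa1*pb0*pb1*pc0^2 - s4*pa1*pb0^2*pc0*pc1 - s4*pa1*pb0^2*pb1*pc0 - s4*pa1^2*pb0*pc0^2 + s4*pa1^2*pb0^2*pc0 + s4*pa0*pb1*pc0^2*pc1 - s4*pa0*pb0^2*pb1*pc1 - s4*pa0*pa1*pc0^2*pc1 - s4*pa0*pa1*pb1*pc0^2 + s4*pa0*pa1*pb0^2*pc1 + s4*pa0*pa1*pb0^2*pb1 + s4*pa0*pa1^2*pc0^2 - s4*pa0*pa1^2*pb0^2 - s4*pa0^2*pb1*pc0*pc1 + s4*pa0^2*pb0*pb1*pc1 + s4*pa0^2*pa1*pc0*pc1 + s4*pa0^2*pa1*pb1*pc0 - s4*pa0^2*pa1*pb0*pc1 - s4*pa0^2*pa1*pb0*pb1 - s4*pa0^2*pa1^2*pc0 + s4*pa0^2*pa1^2*pb0) * hf1 +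
      (s5*pb0*pb1*pc0*pc1^2 - s5*pb0*pb1^2*pc0*pc1 - s5*pa1*pb0*pc0*pc1^2 + s5*pa1*pb0*pb1^2*pc0 + s5*pa1^2*pb0*pc0*pc1 - s5*pa1^2*pb0*pb1*pc0 - s5*pa0*pb1*pc0*pc1^2 + s5*pa0*pb1^2*pc0*pc1 - s5*pa0*pb0*pb1*pc1^2 + s5*pa0*pb0*pb1^2*pc1 + s5*pa0*pa1*pc0*pc1^2 - s5*pa0*pa1*pb1^2*pc0 + s5*pa0*pa1*pb0*pc1^2 - s5*pa0*pa1*pb0*pb1^2 - s5*pa0*pa1^2*pc0*pc1 + s5*pa0*pa1^2*pb1*pc0 - s5*pa0*pa1^2*pb0*pc1 + s5*pa0*pa1^2*pb0*pb1 + s5*pa0^2*pb1*pc1^2 - s5*pa0^2*pb1^2*pc1 - s5*pa0^2*pa1*pc1^2 + s5*pa0^2*pa1*pb1^2 + s5*pa0^2*pa1^2*pc1 - s5*pa0^2*pa1^2*pb1 - s3*pb0*pb1*pc0*pc1^2 + s3*pb0*pb1^2*pc0*pc1 + s3*pa1*pb0*pc0*pc1^2 - s3*pa1*pb0*pb1^2*pc0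 - s3*pa1^2*pb0*pc0*pc1 + s3*pa1^2*pb0*pb1*pc0 + s3*pa0*pb1*pc0*pc1^2 - s3*pa0*pb1^2*pc0*pc1 + s3*pa0*pb0*pb1*pc1^2 - s3*pa0*pb0*pb1^2*pc1 - s3*pa0*pa1*pc0*pc1^2 + s3*pa0*pa1*pb1^2*pc0 - s3*pa0*pa1*pb0*pc1^2 + s3*pa0*pa1*pb0*pb1^2 + s3*pa0*pa1^2*pc0*pc1 - s3*pa0*pa1^2*pb1*pc0 + s3*pa0*pa1^2*pb0*pc1 - s3*pa0*pa1^2*pb0*pb1 - s3*pa0^2*pb1*pc1^2 + s3*pa0^2*pb1^2*pc1 + s3*pa0^2*pa1*pc1^2 - s3*pa0^2*pa1*pb1^2 - s3*pa0^2*pa1^2*pc1 + s3*pa0^2*pa1^2*pb1) * hf2 +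
      (-pb0*pb1^2*pc0^2*pc1 + pb0*pb1^3*pc0^2 + pb0^2*pb1*pc0*pc1^2 - pb0^2*pb1^2*pc0*pc1 + pa1*pb0*pb1*pc0^2*pc1 - pa1*pb0*pb1^2*pc0^2 - pa1*pb0^2*pc0*pc1^2 + pa1*pb0^2*pb1*pc0*pc1 + pa0*pb1^2*pc0^2*pc1 - pa0*pb1^3*pc0^2 - pa0*pb0*pb1*pc0*pc1^2 + 2*pa0*pb0*pb1^2*pc0*pc1 - pa0*pb0*pb1^3*pc0 - pa0*pb0^2*pb1*pc1^2 + pa0*pb0^2*pb1^2*pc1 - pa0*pa1*pb1*pc0^2*pc1 + pa0*pa1*pb1^2*pc0^2 + pa0*pa1*pb0*pc0*pc1^2 - 2*pa0*pa1*pb0*pb1*pc0*pc1 + pa0*pa1*pb0*pb1^2*pc0 + pa0*pa1*pb0^2*pc1^2 - pa0*pa1*pb0^2*pb1*pc1 - pa0^2*pb1^2*pc0*pc1 + pa0^2*pb1^3*pc0 + pa0^2*pb0*pb1*pc1^2 - pa0^2*pb0*pb1^2*pc1 + pa0^2*pa1*pb1*pc0*pc1 - pa0^2*pa1*pb1^2*pc0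 - pa0^2*pa1*pb0*pc1^2 + pa0^2*pa1*pb0*pb1*pc1 + s6*pb0*pb1*pc0^2*pc1 - s6*pb0*pb1^2*pc0^2 - s6*pb0^2*pb1*pc0*pc1 + s6*pb0^2*pb1^2*pc0 - s6*pa1*pb0*pc0^2*pc1 + s6*pa1*pb0*pb1*pc0^2 + s6*pa1*pb0^2*pc0*pc1 - s6*pa1*pb0^2*pb1*pc0 - s6*pa0*pb1*pc0^2*pc1 + s6*pa0*pb1^2*pc0^2 + s6*pa0*pb0^2*pb1*pc1 - s6*pa0*pb0^2*pb1^2 + s6*pa0*pa1*pc0^2*pc1 - s6*pa0*pa1*pb1*pc0^2 - s6*pa0*pa1*pb0^2*pc1 + s6*pa0*pa1*pb0^2*pb1 + s6*pa0^2*pb1*pc0*pc1 - s6*pa0^2*pb1^2*pc0 - s6*pa0^2*pb0*pb1*pc1 + s6*pa0^2*pb0*pb1^2 - s6*pa0^2*pa1*pc0*pc1 + s6*pa0^2*pa1*pb1*pc0 + s6*pa0^2*pa1*pb0*pc1 - s6*pa0^2*pa1*pb0*pb1) * hf3 +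
      (pb0*pb1^2*pc0^2*pc1 - pb0^2*pb1*pc0*pc1^2 - pb0^2*pb1^2*pc0*pc1 + pb0^3*pb1*pc1^2 - pa1*pb0*pb1*pc0^2*pc1 - pa1*pb0*pb1^2*pc0^2 + pa1*pb0^2*pc0*pc1^2 + 2*pa1*pb0^2*pb1*pc0*pc1 + pa1*pb0^2*pb1^2*pc0 - pa1*pb0^3*pc1^2 - pa1*pb0^3*pb1*pc1 + pa1^2*pb0*pb1*pc0^2 - pa1^2*pb0^2*pc0*pc1 - pa1^2*pb0^2*pb1*pc0 + pa1^2*pb0^3*pc1 - pa0*pb1^2*pc0^2*pc1 + pa0*pb0*pb1*pc0*pc1^2 + pa0*pb0*pb1^2*pc0*pc1 - pa0*pb0^2*pb1*pc1^2 + pa0*pa1*pb1*pc0^2*pc1 + pa0*pa1*pb1^2*pc0^2 - pa0*pa1*pb0*pc0*pc1^2 - 2*pa0*pa1*pb0*pb1*pc0*pc1 - pa0*pa1*pb0*pb1^2*pc0 + pa0*pa1*pb0^2*pc1^2 + pa0*pa1*pb0^2*pb1*pc1 - pa0*pa1^2*pb1*pc0^2 + pa0*pa1^2*pb0*pc0*pc1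 + pa0*pa1^2*pb0*pb1*pc0 - pa0*pa1^2*pb0^2*pc1 + s5*pb0*pb1*pc0*pc1^2 - s5*pb0*pb1^2*pc0*pc1 - s5*pb0^2*pb1*pc1^2 + s5*pb0^2*pb1^2*pc1 - s5*pa1*pb0*pc0*pc1^2 + s5*pa1*pb0*pb1^2*pc0 + s5*pa1*pb0^2*pc1^2 - s5*pa1*pb0^2*pb1^2 + s5*pa1^2*pb0*pc0*pc1 - s5*pa1^2*pb0*pb1*pc0 - s5*pa1^2*pb0^2*pc1 + s5*pa1^2*pb0^2*pb1 - s5*pa0*pb1*pc0*pc1^2 + s5*pa0*pb1^2*pc0*pc1 + s5*pa0*pb0*pb1*pc1^2 - s5*pa0*pb0*pb1^2*pc1 + s5*pa0*pa1*pc0*pc1^2 - s5*pa0*pa1*pb1^2*pc0 - s5*pa0*pa1*pb0*pc1^2 + s5*pa0*pa1*pb0*pb1^2 - s5*pa0*pa1^2*pc0*pc1 + s5*pa0*pa1^2*pb1*pc0 + s5*pa0*pa1^2*pb0*pc1 - s5*pa0*pa1^2*pb0*pb1) * hf4 +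
      (-pb0*pb1*pc0^2*pc1^2 + pb0*pb1^2*pc0^2*pc1 + pb0^2*pc0*pc1^3 - pb0^2*pb1*pc0*pc1^2 + pa1*pb0*pc0^2*pc1^2 - pa1*pb0*pb1^2*pc0^2 - 2*pa1*pb0^2*pc0*pc1^2 + 2*pa1*pb0^2*pb1*pc0*pc1 - pa1^2*pb0*pc0^2*pc1 + pa1^2*pb0*pb1*pc0^2 + pa1^2*pb0^2*pc0*pc1 - pa1^2*pb0^2*pb1*pc0 + pa0*pb1*pc0^2*pc1^2 - pa0*pb1^2*pc0^2*pc1 - 2*pa0*pb0*pc0*pc1^3 + 3*pa0*pb0*pb1*pc0*pc1^2 - pa0*pb0*pb1^2*pc0*pc1 - pa0*pa1*pc0^2*pc1^2 + pa0*pa1*pb1^2*pc0^2 + 3*pa0*pa1*pb0*pc0*pc1^2 - 4*pa0*pa1*pb0*pb1*pc0*pc1 + pa0*pa1*pb0*pb1^2*pc0 + pa0*pa1^2*pc0^2*pc1 - pa0*pa1^2*pb1*pc0^2 - pa0*pa1^2*pb0*pc0*pc1 + pa0*pa1^2*pb0*pb1*pc0 + pa0^2*pc0*pc1^3 - 2*pa0^2*pb1*pc0*pc1^2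 + pa0^2*pb1^2*pc0*pc1 - pa0^2*pa1*pc0*pc1^2 + 2*pa0^2*pa1*pb1*pc0*pc1 - pa0^2*pa1*pb1^2*pc0) * hf5 +
      (pb1^2*pc0^3*pc1 - pb0*pb1*pc0^2*pc1^2 - pb0*pb1^2*pc0^2*pc1 + pb0^2*pb1*pc0*pc1^2 - 2*pa1*pb1*pc0^3*pc1 + pa1*pb0*pc0^2*pc1^2 + 3*pa1*pb0*pb1*pc0^2*pc1 - pa1*pb0^2*pc0*pc1^2 - pa1*pb0^2*pb1*pc0*pc1 + pa1^2*pc0^3*pc1 - 2*pa1^2*pb0*pc0^2*pc1 + pa1^2*pb0^2*pc0*pc1 + pa0*pb1*pc0^2*pc1^2 - 2*pa0*pb1^2*pc0^2*pc1 + 2*pa0*pb0*pb1^2*pc0*pc1 - pa0*pb0^2*pb1*pc1^2 - pa0*pa1*pc0^2*pc1^2 + 3*pa0*pa1*pb1*pc0^2*pc1 - 4*pa0*pa1*pb0*pb1*pc0*pc1 + pa0*pa1*pb0^2*pc1^2 + pa0*pa1*pb0^2*pb1*pc1 - pa0*pa1^2*pc0^2*pc1 + 2*pa0*pa1^2*pb0*pc0*pc1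 - pa0*pa1^2*pb0^2*pc1 - pa0^2*pb1*pc0*pc1^2 + pa0^2*pb1^2*pc0*pc1 + pa0^2*pb0*pb1*pc1^2 - pa0^2*pb0*pb1^2*pc1 + pa0^2*pa1*pc0*pc1^2 - pa0^2*pa1*pb1*pc0*pc1 - pa0^2*pa1*pb0*pc1^2 + pa0^2*pa1*pb0*pb1*pc1) * hf6 -
      (-pb0*pb1^2*pc0^3 - pb0^3*pc0*pc1^2 - 2*pb0^3*pc0^3 + 2*pa1*pb0*pb1*pc0^3 - 2*pa1*pb0^2*pc0^2*pc1 + 2*pa1*pb0^3*pc0*pc1 - pa1^2*pb0*pc0^3 + 2*pa1^2*pb0^2*pc0^2 - pa1^2*pb0^3*pc0 + 3*pa0*pb0*pb1^2*pc0^2 + 2*pa0*pb0^2*pc0*pc1^2 + 2*pa0*pb0^2*pc0^3 + pa0*pb0^3*pc1^2 + 6*pa0*pb0^3*pc0^2 + 2*pa0*pa1*pb0*pc0^2*pc1 - 6*pa0*pa1*pb0*pb1*pc0^2 - 2*pa0*pa1*pb0^3*pc1 + pa0*pa1^2*pb0*pc0^2 - 2*pa0*pa1^2*pb0^2*pc0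 + pa0*pa1^2*pb0^3 - pa0^2*pb0*pc0*pc1^2 - 3*pa0^2*pb0*pb1^2*pc0 - 2*pa0^2*pb0^2*pc1^2 - 6*pa0^2*pb0^2*pc0^2 - 6*pa0^2*pb0^3*pc0 - 2*pa0^2*pa1*pb0*pc0*pc1 + 6*pa0^2*pa1*pb0*pb1*pc0 + 2*pa0^2*pa1*pb0^2*pc1 + pa0^3*pb0*pc1^2 + pa0^3*pb0*pb1^2 + 6*pa0^3*pb0^2*pc0 + 2*pa0^3*pb0^3 - 2*pa0^3*pa1*pb0*pb1 - 2*pa0^4*pb0^2) * he1 -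
      (-2*pa1*pb0^2*pc0^2*pc1 + 2*pa1*pb0^2*pb1*pc0^2 - pa0*pb1^2*pc0^3 + 2*pa0*pb0*pb1*pc0^2*pc1 + pa0*pb0*pb1^2*pc0^2 - pa0*pb0^2*pc0*pc1^2 - 2*pa0*pb0^2*pc0^3 - 2*pa0*pb0^2*pb1*pc0*pc1 + pa0*pb0^3*pc1^2 + 2*pa0*pb0^3*pc0^2 + 2*pa0*pa1*pb1*pc0^3 - 6*pa0*pa1*pb0*pb1*pc0^2 + 8*pa0*pa1*pb0^2*pc0*pc1 - 2*pa0*pa1*pb0^2*pb1*pc0 - 2*pa0*pa1*pb0^3*pc1 - pa0*pa1^2*pc0^3 + 3*pa0*pa1^2*pb0*pc0^2 - 3*pa0*pa1^2*pb0^2*pc0 + pa0*pa1^2*pb0^3 - 2*pa0^2*pb1*pc0^2*pc1 + 2*pa0^2*pb1^2*pc0^2 + 2*pa0^2*pb0*pc0*pc1^2 + 2*pa0^2*pb0*pc0^3 - 2*pa0^2*pb0*pb1^2*pc0 - 2*pa0^2*pb0^2*pc1^2 + 2*pa0^2*pb0^2*pc0^2 + 2*pa0^2*pb0^2*pb1*pc1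 - 4*pa0^2*pb0^3*pc0 + 2*pa0^2*pa1*pc0^2*pc1 - 2*pa0^2*pa1*pb1*pc0^2 - 8*pa0^2*pa1*pb0*pc0*pc1 + 8*pa0^2*pa1*pb0*pb1*pc0 - pa0^3*pc0*pc1^2 + 2*pa0^3*pb1*pc0*pc1 - pa0^3*pb1^2*pc0 + pa0^3*pb0*pc1^2 - 4*pa0^3*pb0*pc0^2 - 2*pa0^3*pb0*pb1*pc1 + pa0^3*pb0*pb1^2 + 2*pa0^3*pb0^2*pc0 + 2*pa0^3*pb0^3 + 2*pa0^3*pa1*pb0*pc1 - 2*pa0^3*pa1*pb0*pb1 + 2*pa0^4*pb0*pc0 - 2*pa0^4*pb0^2) * he2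
  have hGs : (s3 - s1) * (s6 - s2) - (s4 - s2) * (s5 - s1) = 0 := by
    refine (mul_eq_zero.mp hkey).resolve_left ?_
    exact mul_ne_zero (mul_ne_zero (mul_ne_zero (mul_ne_zero (mul_ne_zero hd1 hd2) hd3)
      hd4) hd5) hd6
  -- back to raw coordinates and the goal
  rw [hs1, hs2, hs3, hs4, hs5, hs6] at hGs
  apply collinear_of_cross
  simp only [midcoord]
  rw [hX10, hX11, hX20, hX21, hY10, hY11, hY20, hY21, hZ10, hZ11, hZ20, hZ21]
  refine (mul_eq_zero.mp ?_).resolve_left hU2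
  linear_combination (1 / 4 : ℝ) * hGs
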